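/- arXiv:0903.4296 — 4 statements merged into one kernel-verified Lean document; each statement's English description precedes it below -/
import Mathlib

section
/- Let F, G, σ be C¹ on an interval J with F'² < 2σ'G' on J, let s(u,v) denote the second component of the inverse of the diffeomorphism Ψ(u,s) = (u, G(s)u²/2 + F(s)u + σ(s)) (assumed to be injective), and set φ(u,v) = F(s(u,v)) + u G(s(u,v)). Then B_φ(φ) = φ_u + φ φ_v = G(s(u,v)) on Ψ(ℝ × J). -/
/-- Partial derivative in the first variable. -/
noncomputable def pdu (f : ℝ → ℝ → ℝ) (u v : ℝ) : ℝ := deriv (fun x => f x v) u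

/-- Partial derivative in the second variable. -/
noncomputable def pdv (f : ℝ → ℝ → ℝ) (u v : ℝ) : ℝ := deriv (fun y => f u y) v

/-- In the setting of an intrinsic graphical strip, with
`φ(u,v) = F(s(u,v)) + u G(s(u,v))`, one has `B_φ(φ) = φ_u + φ φ_v = G(s(u,v))`
on `Ψ(ℝ × J)`. -/
theorem stmt_6 (J : Set ℝ) (hJopen : IsOpen J) (hJ : J.OrdConnected)
    (F G σ : ℝ → ℝ)
    (hF : ContDiffOn ℝ 1 F J) (hG : ContDiffOn ℝ 1 G J) (hσ : ContDiffOn ℝ 1 σ J)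
    (hstrict : ∀ s ∈ J, (deriv F s) ^ 2 < 2 * deriv σ s * deriv G s)
    (Ψ : ℝ × ℝ → ℝ × ℝ)
    (hΨ : ∀ p : ℝ × ℝ, Ψ p = (p.1, G p.2 * p.1 ^ 2 / 2 + F p.2 * p.1 + σ p.2))
    (hinj : Set.InjOn Ψ (Set.univ ×ˢ J))
    (Ω : Set (ℝ × ℝ)) (hΩ : Ω = Ψ '' (Set.univ ×ˢ J)) (hΩopen : IsOpen Ω)
    (sVal : ℝ → ℝ → ℝ)
    (hinv : ∀ u : ℝ, ∀ s ∈ J, sVal u (G s * u ^ 2 / 2 + F s * u + σ s) = s)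
    (hsC1 : ContDiffOn ℝ 1 (fun p : ℝ × ℝ => sVal p.1 p.2) Ω)
    (φ : ℝ → ℝ → ℝ)
    (hφ : ∀ u v : ℝ, φ u v = F (sVal u v) + u * G (sVal u v)) :
    ∀ p ∈ Ω, pdu φ p.1 p.2 + φ p.1 p.2 * pdv φ p.1 p.2 = G (sVal p.1 p.2) := by
  -- key fact: on Ω, sVal lands in J and satisfies the implicit equation
  have key : ∀ q ∈ Ω, sVal q.1 q.2 ∈ J ∧
      G (sVal q.1 q.2) * q.1 ^ 2 / 2 + F (sVal q.1 q.2) * q.1 + σ (sVal q.1 q.2) = q.2 := by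
    intro q hq
    rw [hΩ] at hq
    obtain ⟨⟨u, s⟩, hmem, hq'⟩ := hq
    have hsJ : s ∈ J := hmem.2
    rw [hΨ] at hq'
    have h1 : q.1 = u := by rw [← hq']
    have h2 : q.2 = G s * u ^ 2 / 2 + F s * u + σ s := by rw [← hq']
    have hs : sVal q.1 q.2 = s := by rw [h1, h2]; exact hinv u s hsJ
    refine ⟨hs ▸ hsJ, ?_⟩
    rw [hs, h1, h2]
  intro p hp
  obtain ⟨⟨u₀, s₀⟩, hmem, hq'⟩ := hΩ ▸ hp
  have hpeq : p = (u₀, G s₀ * u₀ ^ 2 / 2 + F s₀ * u₀ + σ s₀) := by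
    rw [← hq', hΨ]
  subst hpeq
  set v₀ : ℝ := G s₀ * u₀ ^ 2 / 2 + F s₀ * u₀ + σ s₀ with hv₀
  simp only
  set a : ℝ := sVal u₀ v₀ with ha
  have haJ : a ∈ J := (key (u₀, v₀) hp).1
  -- derivatives of F, G, σ at a
  have hFd : HasDerivAt F (deriv F a) a :=
    ((hF.differentiableOn one_ne_zero).differentiableAt (hJopen.mem_nhds haJ)).hasDerivAt
  have hGd : HasDerivAt G (deriv G a) a :=
    ((hG.differentiableOn one_ne_zero).differentiableAt (hJopen.mem_nhds haJ)).hasDerivAt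
  have hσd : HasDerivAt σ (deriv σ a) a :=
    ((hσ.differentiableOn one_ne_zero).differentiableAt (hJopen.mem_nhds haJ)).hasDerivAt
  set F' := deriv F a
  set G' := deriv G a
  set σ' := deriv σ a
  -- derivatives of sVal slices
  have hdiff : DifferentiableAt ℝ (fun p : ℝ × ℝ => sVal p.1 p.2) (u₀, v₀) :=
    (hsC1.differentiableOn one_ne_zero).differentiableAt (hΩopen.mem_nhds hp)
  set L := fderiv ℝ (fun p : ℝ × ℝ => sVal p.1 p.2) (u₀, v₀) with hL
  set su : ℝ := L (1, 0) with hsu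
  set sv : ℝ := L (0, 1) with hsv
  have hSu : HasDerivAt (fun u => sVal u v₀) su u₀ := by
    have hc : HasDerivAt (fun u : ℝ => ((u, v₀) : ℝ × ℝ)) ((1 : ℝ), (0 : ℝ)) u₀ :=
      HasDerivAt.prodMk (hasDerivAt_id u₀) (hasDerivAt_const u₀ v₀)
    exact hdiff.hasFDerivAt.comp_hasDerivAt u₀ hc
  have hSv : HasDerivAt (fun v => sVal u₀ v) sv v₀ := by
    have hc : HasDerivAt (fun v : ℝ => ((u₀, v) : ℝ × ℝ)) ((0 : ℝ), (1 : ℝ)) v₀ :=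
      HasDerivAt.prodMk (hasDerivAt_const v₀ u₀) (hasDerivAt_id v₀)
    exact hdiff.hasFDerivAt.comp_hasDerivAt v₀ hc
  -- chain rules
  have hFSu : HasDerivAt (fun u => F (sVal u v₀)) (F' * su) u₀ := hFd.comp u₀ hSu
  have hGSu : HasDerivAt (fun u => G (sVal u v₀)) (G' * su) u₀ := hGd.comp u₀ hSu
  have hσSu : HasDerivAt (fun u => σ (sVal u v₀)) (σ' * su) u₀ := hσd.comp u₀ hSu
  have hFSv : HasDerivAt (fun v => F (sVal u₀ v)) (F' * sv) v₀ := hFd.comp v₀ hSv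
  have hGSv : HasDerivAt (fun v => G (sVal u₀ v)) (G' * sv) v₀ := hGd.comp v₀ hSv
  have hσSv : HasDerivAt (fun v => σ (sVal u₀ v)) (σ' * sv) v₀ := hσd.comp v₀ hSv
  -- the implicit equation in the u direction
  have hE : HasDerivAt
      (fun u => G (sVal u v₀) * u ^ 2 / 2 + F (sVal u v₀) * u + σ (sVal u v₀))
      ((G' * su * u₀ ^ 2 + G a * ((2 : ℕ) * u₀ ^ 1)) / 2 + (F' * su * u₀ + F a * 1) + σ' * su)
      u₀ :=
    (((hGSu.mul (hasDerivAt_pow 2 u₀)).div_const 2).add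
      (hFSu.mul (hasDerivAt_id u₀))).add hσSu
  have hnbu : ∀ᶠ u in nhds u₀, ((u, v₀) : ℝ × ℝ) ∈ Ω := by
    have hc : ContinuousAt (fun u : ℝ => ((u, v₀) : ℝ × ℝ)) u₀ :=
      (continuous_id.prodMk continuous_const).continuousAt
    exact hc (hΩopen.mem_nhds hp)
  have hEqu : (fun u => G (sVal u v₀) * u ^ 2 / 2 + F (sVal u v₀) * u + σ (sVal u v₀))
      =ᶠ[nhds u₀] fun _ => v₀ := by
    filter_upwards [hnbu] with u hu
    exact (key (u, v₀) hu).2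
  have hE0 : HasDerivAt
      (fun u => G (sVal u v₀) * u ^ 2 / 2 + F (sVal u v₀) * u + σ (sVal u v₀)) 0 u₀ :=
    (hasDerivAt_const u₀ v₀).congr_of_eventuallyEq hEqu
  have hu_eq : (G' * su * u₀ ^ 2 + G a * ((2 : ℕ) * u₀ ^ 1)) / 2 + (F' * su * u₀ + F a * 1)
      + σ' * su = 0 := hE.unique hE0
  -- the implicit equation in the v direction
  have hEv : HasDerivAt
      (fun v => G (sVal u₀ v) * u₀ ^ 2 / 2 + F (sVal u₀ v) * u₀ + σ (sVal u₀ v))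
      ((G' * sv * u₀ ^ 2 / 2 + F' * sv * u₀) + σ' * sv) v₀ :=
    (((hGSv.mul_const (u₀ ^ 2)).div_const 2).add (hFSv.mul_const u₀)).add hσSv
  have hnbv : ∀ᶠ v in nhds v₀, ((u₀, v) : ℝ × ℝ) ∈ Ω := by
    have hc : ContinuousAt (fun v : ℝ => ((u₀, v) : ℝ × ℝ)) v₀ :=
      (continuous_const.prodMk continuous_id).continuousAt
    exact hc (hΩopen.mem_nhds hp)
  have hEqv : (fun v => G (sVal u₀ v) * u₀ ^ 2 / 2 + F (sVal u₀ v) * u₀ + σ (sVal u₀ v))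
      =ᶠ[nhds v₀] fun v => v := by
    filter_upwards [hnbv] with v hv
    exact (key (u₀, v) hv).2
  have hEv1 : HasDerivAt
      (fun v => G (sVal u₀ v) * u₀ ^ 2 / 2 + F (sVal u₀ v) * u₀ + σ (sVal u₀ v)) 1 v₀ :=
    (hasDerivAt_id' v₀).congr_of_eventuallyEq hEqv
  have hv_eq : (G' * sv * u₀ ^ 2 / 2 + F' * sv * u₀) + σ' * sv = 1 := hEv.unique hEv1
  -- nonvanishing of the Jacobian factor
  have hD : G' * u₀ ^ 2 / 2 + F' * u₀ + σ' ≠ 0 := by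
    intro h
    have h2 : G' * (G' * u₀ ^ 2 / 2 + F' * u₀ + σ') = 0 := by rw [h]; ring
    nlinarith [sq_nonneg (G' * u₀ + F'), hstrict a haJ]
  -- su + φ * sv = 0
  have hzero : su + (F a + u₀ * G a) * sv = 0 := by
    have hmul : (G' * u₀ ^ 2 / 2 + F' * u₀ + σ') * (su + (F a + u₀ * G a) * sv) = 0 := by
      push_cast at hu_eq
      linear_combination hu_eq + (F a + u₀ * G a) * hv_eq
    rcases mul_eq_zero.1 hmul with h | h
    · exact absurd h hD
    · exact h
  -- derivatives of φ
  have hφu : HasDerivAt (fun u => F (sVal u v₀) + u * G (sVal u v₀))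
      (F' * su + (1 * G a + u₀ * (G' * su))) u₀ :=
    hFSu.add ((hasDerivAt_id u₀).mul hGSu)
  have hφv : HasDerivAt (fun v => F (sVal u₀ v) + u₀ * G (sVal u₀ v))
      (F' * sv + u₀ * (G' * sv)) v₀ :=
    hFSv.add (hGSv.const_mul u₀)
  rw [pdu, pdv]
  simp only [hφ]
  rw [hφu.deriv, hφv.deriv]
  linear_combination (F' + u₀ * G') * hzero
end

section
/- The function φ defined by an intrinsic graphical strip satisfies the double Burger equation B_φ(B_φ(φ)) = 0; in particular every strict intrinsic graphical strip is a minimal surface. -/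
/-- The linearized Burger operator `B_φ(f) = f_u + φ f_v`. -/
noncomputable def burger (φ f : ℝ → ℝ → ℝ) (u v : ℝ) : ℝ :=
  pdu f u v + φ u v * pdv f u v

/-- The function `φ` defined by an intrinsic graphical strip satisfies the double
Burger equation `B_φ(B_φ(φ)) = 0`; in particular every strict intrinsic graphical
strip is a minimal surface. -/
theorem stmt_9 (J : Set ℝ) (hJopen : IsOpen J) (hJ : J.OrdConnected)
    (F G σ : ℝ → ℝ)
    (hF : ContDiffOn ℝ 2 F J) (hG : ContDiffOn ℝ 2 G J) (hσ : ContDiffOn ℝ 2 σ J)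
    (hstrict : ∀ s ∈ J, (deriv F s) ^ 2 < 2 * deriv σ s * deriv G s)
    (Ψ : ℝ × ℝ → ℝ × ℝ)
    (hΨ : ∀ p : ℝ × ℝ, Ψ p = (p.1, G p.2 * p.1 ^ 2 / 2 + F p.2 * p.1 + σ p.2))
    (hinj : Set.InjOn Ψ (Set.univ ×ˢ J))
    (Ω : Set (ℝ × ℝ)) (hΩ : Ω = Ψ '' (Set.univ ×ˢ J)) (hΩopen : IsOpen Ω)
    (sVal : ℝ → ℝ → ℝ)
    (hinv : ∀ u : ℝ, ∀ s ∈ J, sVal u (G s * u ^ 2 / 2 + F s * u + σ s) = s)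
    (hsC1 : ContDiffOn ℝ 1 (fun p : ℝ × ℝ => sVal p.1 p.2) Ω)
    (φ : ℝ → ℝ → ℝ)
    (hφ : ∀ u v : ℝ, φ u v = F (sVal u v) + u * G (sVal u v)) :
    ∀ p ∈ Ω, burger φ (burger φ φ) p.1 p.2 = 0 := by
  -- membership facts on Ω
  have mem : ∀ q ∈ Ω, sVal q.1 q.2 ∈ J ∧
      q.2 = G (sVal q.1 q.2) * q.1 ^ 2 / 2 + F (sVal q.1 q.2) * q.1 + σ (sVal q.1 q.2) := by
    intro q hq
    rw [hΩ] at hq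
    obtain ⟨⟨u', s'⟩, hmem', rfl⟩ := hq
    have hs' : s' ∈ J := hmem'.2
    rw [hΨ]
    simp only
    rw [hinv u' s' hs']
    exact ⟨hs', rfl⟩
  -- key computation at every point of Ω
  have key : ∀ u v : ℝ, (u, v) ∈ Ω →
      deriv (fun x => sVal x v) u + φ u v * deriv (fun y => sVal u y) v = 0 ∧
      burger φ φ u v = G (sVal u v) := by
    intro u v hq
    obtain ⟨hs0J, hv⟩ := mem (u, v) hq
    set s0 := sVal u v with hs0
    -- differentiability of sVal near (u, v)
    have hf : DifferentiableAt ℝ (fun p : ℝ × ℝ => sVal p.1 p.2) (u, v) :=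
      (hsC1.contDiffAt (hΩopen.mem_nhds hq)).differentiableAt (by norm_num)
    have hgu : DifferentiableAt ℝ (fun x => sVal x v) u :=
      (hf.comp u (differentiableAt_id.prodMk (differentiableAt_const v) :
        DifferentiableAt ℝ (fun x : ℝ => (x, v)) u) :)
    have hgv : DifferentiableAt ℝ (fun y => sVal u y) v :=
      hf.comp v ((differentiableAt_const _).prodMk differentiableAt_id)
    set a := deriv (fun x => sVal x v) u with ha
    set b := deriv (fun y => sVal u y) v with hb
    have hga : HasDerivAt (fun x => sVal x v) a u := hgu.hasDerivAt
    have hgb : HasDerivAt (fun y => sVal u y) b v := hgv.hasDerivAt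
    -- derivatives of F, G, σ at s0
    have hF' : HasDerivAt F (deriv F s0) s0 :=
      (((hF.contDiffAt (hJopen.mem_nhds hs0J)).differentiableAt (by norm_num))).hasDerivAt
    have hG' : HasDerivAt G (deriv G s0) s0 :=
      (((hG.contDiffAt (hJopen.mem_nhds hs0J)).differentiableAt (by norm_num))).hasDerivAt
    have hσ' : HasDerivAt σ (deriv σ s0) s0 :=
      (((hσ.contDiffAt (hJopen.mem_nhds hs0J)).differentiableAt (by norm_num))).hasDerivAt
    -- compositions
    have hFa : HasDerivAt (fun x => F (sVal x v)) (deriv F s0 * a) u := hF'.comp u hga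
    have hGa : HasDerivAt (fun x => G (sVal x v)) (deriv G s0 * a) u := hG'.comp u hga
    have hσa : HasDerivAt (fun x => σ (sVal x v)) (deriv σ s0 * a) u := hσ'.comp u hga
    have hFb : HasDerivAt (fun y => F (sVal u y)) (deriv F s0 * b) v := hF'.comp v hgb
    have hGb : HasDerivAt (fun y => G (sVal u y)) (deriv G s0 * b) v := hG'.comp v hgb
    have hσb : HasDerivAt (fun y => σ (sVal u y)) (deriv σ s0 * b) v := hσ'.comp v hgb
    -- neighborhood facts
    have hnu : {x : ℝ | (x, v) ∈ Ω} ∈ nhds u :=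
      (hΩopen.preimage (continuous_id.prodMk continuous_const)).mem_nhds hq
    have hnv : {y : ℝ | (u, y) ∈ Ω} ∈ nhds v :=
      (hΩopen.preimage (continuous_const.prodMk continuous_id)).mem_nhds hq
    -- horizontal identity: x ↦ G(s)x²/2 + F(s)x + σ(s) is constant = v near u
    have hhu : HasDerivAt (fun x => G (sVal x v) * x ^ 2 / 2 + F (sVal x v) * x + σ (sVal x v))
        ((deriv G s0 * a * u ^ 2 + G s0 * (2 * u ^ 1)) / 2 +
          (deriv F s0 * a * u + F s0 * 1) + deriv σ s0 * a) u := by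
      exact (((hGa.mul (hasDerivAt_pow 2 u)).div_const 2).add (hFa.mul (hasDerivAt_id u))).add hσa
    have hhu0 : HasDerivAt (fun x => G (sVal x v) * x ^ 2 / 2 + F (sVal x v) * x + σ (sVal x v))
        0 u := by
      refine (hasDerivAt_const u v).congr_of_eventuallyEq ?_
      filter_upwards [hnu] with x hx
      exact ((mem (x, v) hx).2).symm
    have eqU : (deriv G s0 * a * u ^ 2 + G s0 * (2 * u ^ 1)) / 2 +
        (deriv F s0 * a * u + F s0 * 1) + deriv σ s0 * a = 0 := hhu.unique hhu0
    -- vertical identity: y ↦ G(s)u²/2 + F(s)u + σ(s) equals y near v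
    have hhv : HasDerivAt (fun y => G (sVal u y) * u ^ 2 / 2 + F (sVal u y) * u + σ (sVal u y))
        (deriv G s0 * b * u ^ 2 / 2 + deriv F s0 * b * u + deriv σ s0 * b) v := by
      exact (((hGb.mul_const (u ^ 2)).div_const 2).add (hFb.mul_const u)).add hσb
    have hhv1 : HasDerivAt (fun y => G (sVal u y) * u ^ 2 / 2 + F (sVal u y) * u + σ (sVal u y))
        1 v := by
      refine (hasDerivAt_id v).congr_of_eventuallyEq ?_
      filter_upwards [hnv] with y hy
      exact ((mem (u, y) hy).2).symm
    have eqV : deriv G s0 * b * u ^ 2 / 2 + deriv F s0 * b * u + deriv σ s0 * b = 1 :=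
      hhv.unique hhv1
    -- first Burger relation
    have hab : a + φ u v * b = 0 := by
      rw [hφ, ← hs0]
      linear_combination b * eqU - a * eqV
    refine ⟨hab, ?_⟩
    -- compute burger φ φ
    have hφu : pdu φ u v = deriv F s0 * a + (1 * G s0 + u * (deriv G s0 * a)) := by
      have : (fun x => φ x v) = fun x => F (sVal x v) + x * G (sVal x v) := by
        funext x; exact hφ x v
      rw [pdu, this]
      exact (hFa.add ((hasDerivAt_id u).mul hGa)).deriv
    have hφv : pdv φ u v = deriv F s0 * b + u * (deriv G s0 * b) := by
      have : (fun y => φ u y) = fun y => F (sVal u y) + u * G (sVal u y) := by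
        funext y; exact hφ u y
      rw [pdv, this]
      exact (hFb.add (hGb.const_mul u)).deriv
    rw [burger, hφu, hφv]
    linear_combination (deriv F s0 + u * deriv G s0) * hab
  -- conclusion
  rintro ⟨u, v⟩ hq
  obtain ⟨hs0J, hv⟩ := mem (u, v) hq
  set s0 := sVal u v with hs0
  have hf : DifferentiableAt ℝ (fun p : ℝ × ℝ => sVal p.1 p.2) (u, v) :=
    (hsC1.contDiffAt (hΩopen.mem_nhds hq)).differentiableAt (by norm_num)
  have hgu : DifferentiableAt ℝ (fun x => sVal x v) u :=
    (hf.comp u (differentiableAt_id.prodMk (differentiableAt_const v) :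
        DifferentiableAt ℝ (fun x : ℝ => (x, v)) u) :)
  have hgv : DifferentiableAt ℝ (fun y => sVal u y) v :=
    hf.comp v ((differentiableAt_const _).prodMk differentiableAt_id)
  set a := deriv (fun x => sVal x v) u with ha
  set b := deriv (fun y => sVal u y) v with hb
  have hG' : HasDerivAt G (deriv G s0) s0 :=
    (((hG.contDiffAt (hJopen.mem_nhds hs0J)).differentiableAt (by norm_num))).hasDerivAt
  have hGa : HasDerivAt (fun x => G (sVal x v)) (deriv G s0 * a) u := hG'.comp u hgu.hasDerivAt
  have hGb : HasDerivAt (fun y => G (sVal u y)) (deriv G s0 * b) v := hG'.comp v hgv.hasDerivAt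
  have hnu : {x : ℝ | (x, v) ∈ Ω} ∈ nhds u :=
    (hΩopen.preimage (continuous_id.prodMk continuous_const)).mem_nhds hq
  have hnv : {y : ℝ | (u, y) ∈ Ω} ∈ nhds v :=
    (hΩopen.preimage (continuous_const.prodMk continuous_id)).mem_nhds hq
  have hpu : pdu (burger φ φ) u v = deriv G s0 * a := by
    rw [pdu]
    have hev : (fun x => burger φ φ x v) =ᶠ[nhds u] fun x => G (sVal x v) := by
      filter_upwards [hnu] with x hx
      exact (key x v hx).2
    rw [hev.deriv_eq]
    exact hGa.deriv
  have hpv : pdv (burger φ φ) u v = deriv G s0 * b := by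
    rw [pdv]
    have hev : (fun y => burger φ φ u y) =ᶠ[nhds v] fun y => G (sVal u y) := by
      filter_upwards [hnv] with y hy
      exact (key u y hy).2
    rw [hev.deriv_eq]
    exact hGb.deriv
  have hab : a + φ u v * b = 0 := (key u v hq).1
  show burger φ (burger φ φ) u v = 0
  rw [burger, hpu, hpv]
  linear_combination deriv G s0 * hab
end

section
/- Let S ⊂ ℍ¹ be parametrized by 𝓛(r,s) = (γ(s) + r(γ'(s))^⊥, h₀(s) − (r/2)γ(s)·γ'(s)) with γ unit-speed. Then S has a characteristic point at parameter (r,s) (i.e. the tangent plane equals the horizontal plane) exactly when W₀(s) − r + (r²/2)κ(s) = 0, where W₀(s) = h₀'(s) + γ'(s)·γ(s)^⊥/2 and κ(s) = γ''(s)·(γ'(s))^⊥; hence S is noncharacteristic along the full line {s = s₀} if and only if 1 − 2W₀(s₀)κ(s₀) < 0. -/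
/-- For the ruled parametrization `𝓛(r,s) = (γ(s) + r(γ'(s))^⊥, h₀(s) − (r/2)γ(s)·γ'(s))`
of a surface `S ⊂ ℍ¹` (with `γ` unit speed and `(a,b)^⊥ = (b,−a)`), the coefficient
along `T` of the tangent vector `∂_s𝓛` in the frame `{X₁, X₂, T}` equals
`W₀(s) − r + (r²/2)κ(s)`; so `(r,s)` is characteristic exactly when this vanishes,
and `S` is noncharacteristic along the full line `{s = s₀}` iff `1 − 2W₀(s₀)κ(s₀) < 0`. -/
theorem stmt_18 (J : Set ℝ) (hJopen : IsOpen J) (hJ : J.OrdConnected)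
    (γ : ℝ → ℝ × ℝ) (hγ : ContDiff ℝ 3 γ)
    (hunit : ∀ s ∈ J, (deriv γ s).1 ^ 2 + (deriv γ s).2 ^ 2 = 1)
    (h₀ : ℝ → ℝ) (hh₀ : ContDiff ℝ 2 h₀)
    (W₀ κ : ℝ → ℝ)
    (hW₀ : ∀ s, W₀ s = deriv h₀ s +
      ((deriv γ s).1 * (γ s).2 - (deriv γ s).2 * (γ s).1) / 2)
    (hκ : ∀ s, κ s = (deriv (deriv γ) s).1 * (deriv γ s).2 -
      (deriv (deriv γ) s).2 * (deriv γ s).1)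
    (L : ℝ → ℝ → ℝ × ℝ × ℝ)
    (hL : ∀ r s, L r s = ((γ s).1 + r * (deriv γ s).2, (γ s).2 - r * (deriv γ s).1,
      h₀ s - r / 2 * ((γ s).1 * (deriv γ s).1 + (γ s).2 * (deriv γ s).2))) :
    ∀ s ∈ J, ∀ r : ℝ,
      ((deriv (fun z => L r z) s).2.2 -
          ((deriv (fun z => L r z) s).2.1 * (L r s).1 -
            (deriv (fun z => L r z) s).1 * (L r s).2.1) / 2 =
        W₀ s - r + r ^ 2 / 2 * κ s) ∧
      ((∀ r' : ℝ, W₀ s - r' + r' ^ 2 / 2 * κ s ≠ 0) ↔ 1 - 2 * W₀ s * κ s < 0) := by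
  intro s hs r
  constructor
  · have hγd : Differentiable ℝ γ := hγ.differentiable (by norm_num)
    have hγ3 : ContDiff ℝ ((2 : ℕ∞) + 1) γ := by exact_mod_cast hγ
    have hγ' : ContDiff ℝ 2 (deriv γ) :=
      (contDiff_succ_iff_deriv.mp hγ3).2.2
    have hγ'd : Differentiable ℝ (deriv γ) := hγ'.differentiable (by norm_num)
    have hh₀d : Differentiable ℝ h₀ := hh₀.differentiable (by norm_num)
    have Hγ : HasDerivAt γ (deriv γ s) s := (hγd s).hasDerivAt
    have Hγ1 : HasDerivAt (fun z => (γ z).1) (deriv γ s).1 s := Hγ.fst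
    have Hγ2 : HasDerivAt (fun z => (γ z).2) (deriv γ s).2 s := Hγ.snd
    have Hdγ : HasDerivAt (deriv γ) (deriv (deriv γ) s) s := (hγ'd s).hasDerivAt
    have Hdγ1 : HasDerivAt (fun z => (deriv γ z).1) (deriv (deriv γ) s).1 s := Hdγ.fst
    have Hdγ2 : HasDerivAt (fun z => (deriv γ z).2) (deriv (deriv γ) s).2 s := Hdγ.snd
    have Hh : HasDerivAt h₀ (deriv h₀ s) s := (hh₀d s).hasDerivAt
    have HL : HasDerivAt (fun z => L r z)
        ((deriv γ s).1 + r * (deriv (deriv γ) s).2,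
         (deriv γ s).2 - r * (deriv (deriv γ) s).1,
         deriv h₀ s - r / 2 *
           (((deriv γ s).1 * (deriv γ s).1 + (γ s).1 * (deriv (deriv γ) s).1) +
            ((deriv γ s).2 * (deriv γ s).2 + (γ s).2 * (deriv (deriv γ) s).2))) s := by
      have heq : (fun z => L r z) = fun z =>
          ((γ z).1 + r * (deriv γ z).2, (γ z).2 - r * (deriv γ z).1,
            h₀ z - r / 2 * ((γ z).1 * (deriv γ z).1 + (γ z).2 * (deriv γ z).2)) :=
        funext fun z => hL r z
      rw [heq]
      exact HasDerivAt.prodMk (Hγ1.add (Hdγ2.const_mul r)) (HasDerivAt.prodMk (Hγ2.sub (Hdγ1.const_mul r))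
        (Hh.sub (HasDerivAt.const_mul (r / 2) (HasDerivAt.add (Hγ1.mul Hdγ1) (Hγ2.mul Hdγ2)))))
    rw [HL.deriv, hL, hW₀, hκ]
    dsimp only
    linear_combination (-r) * hunit s hs
  · constructor
    · intro hnr
      by_contra hge
      have hD : 0 ≤ 1 - 2 * W₀ s * κ s := not_lt.mp hge
      rcases eq_or_ne (κ s) 0 with hk | hk
      · exact hnr (W₀ s) (by rw [hk]; ring)
      · set D := 1 - 2 * W₀ s * κ s with hDdef
        have hs2 : Real.sqrt D ^ 2 = D := Real.sq_sqrt hD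
        set r' := (1 + Real.sqrt D) / κ s with hr'
        apply hnr r'
        have hkr : κ s * r' = 1 + Real.sqrt D := by
          rw [hr']; field_simp
        have key : 2 * κ s * (W₀ s - r' + r' ^ 2 / 2 * κ s) =
            (κ s * r' - 1) ^ 2 - D := by rw [hDdef]; ring
        have : 2 * κ s * (W₀ s - r' + r' ^ 2 / 2 * κ s) = 0 := by
          rw [key, hkr]; linear_combination hs2
        have h2k : (2 : ℝ) * κ s ≠ 0 := by
          simpa using hk
        exact (mul_eq_zero.mp this).resolve_left h2k
    · intro hlt r' h0
      have key : 2 * κ s * (W₀ s - r' + r' ^ 2 / 2 * κ s) =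
          (κ s * r' - 1) ^ 2 - (1 - 2 * W₀ s * κ s) := by ring
      rw [h0, mul_zero] at key
      nlinarith [sq_nonneg (κ s * r' - 1)]
end

section
/- Let g : D ⊂ ℝ² → ℝ be C², set p = g_x + y/2, q = g_y − x/2, W = (p²+q²)^{1/2} with W ≠ 0 on D, and suppose (p/W)_x + (q/W)_y = 0 on D (minimal surface equation). If c(s) is an integral curve of the vector field (q/W)∂_x − (p/W)∂_y through z ∈ D, then (q/W, −p/W) is constant along c and c is a straight line segment; moreover g(c(s)) = g(z) + s(bx − ay)/2 where c(s) = (x + as, y + bs), so the lifted curve (c(s), g(c(s))) is a straight line in ℝ³. -/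
/-- Partial derivative in the first variable. -/
noncomputable def pdx (f : ℝ → ℝ → ℝ) (x y : ℝ) : ℝ := deriv (fun x' => f x' y) x

/-- Partial derivative in the second variable. -/
noncomputable def pdy (f : ℝ → ℝ → ℝ) (x y : ℝ) : ℝ := deriv (fun y' => f x y') y

lemma slice_fst' {F : ℝ × ℝ → ℝ} {w : ℝ × ℝ} (h : DifferentiableAt ℝ F w) :
    HasDerivAt (fun x' => F (x', w.2)) (fderiv ℝ F w (1, 0)) w.1 :=
  h.hasFDerivAt.comp_hasDerivAt w.1 (HasDerivAt.prodMk (hasDerivAt_id w.1) (hasDerivAt_const w.1 w.2))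

lemma slice_snd' {F : ℝ × ℝ → ℝ} {w : ℝ × ℝ} (h : DifferentiableAt ℝ F w) :
    HasDerivAt (fun y' => F (w.1, y')) (fderiv ℝ F w (0, 1)) w.2 :=
  h.hasFDerivAt.comp_hasDerivAt w.2 (HasDerivAt.prodMk (hasDerivAt_const w.2 w.1) (hasDerivAt_id w.2))

lemma clm_split (L : ℝ × ℝ →L[ℝ] ℝ) (a b : ℝ) :
    L (a, b) = a * L (1, 0) + b * L (0, 1) := by
  have h : ((a, b) : ℝ × ℝ) = a • ((1 : ℝ), (0 : ℝ)) + b • ((0 : ℝ), (1 : ℝ)) := by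
    simp [Prod.ext_iff]
  rw [h, map_add, map_smul, map_smul, smul_eq_mul, smul_eq_mul]

/-- Foliation lemma for minimal graphs over the `xy`-plane in `ℍ¹`: if `g` is `C²` on
an open set `D`, `p = g_x + y/2`, `q = g_y − x/2`, `W = (p² + q²)^{1/2} ≠ 0`, and
`(p/W)_x + (q/W)_y = 0` on `D`, then along any integral curve `c` of
`(q/W)∂_x − (p/W)∂_y` through `z ∈ D` the field `(q/W, −p/W)` is constant,
`c` is a straight line segment `c(s) = z + s(a,b)` with `(a,b) = (q/W, −p/W)(z)`,
and `g(c(s)) = g(z) + s(bx − ay)/2`, so the lifted curve is a straight line in `ℝ³`. -/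
theorem stmt_19 (D : Set (ℝ × ℝ)) (hD : IsOpen D) (g : ℝ → ℝ → ℝ)
    (hg : ContDiffOn ℝ 2 (fun z : ℝ × ℝ => g z.1 z.2) D)
    (P Q W : ℝ → ℝ → ℝ)
    (hP : ∀ x y, P x y = pdx g x y + y / 2)
    (hQ : ∀ x y, Q x y = pdy g x y - x / 2)
    (hW : ∀ x y, W x y = Real.sqrt (P x y ^ 2 + Q x y ^ 2))
    (hWne : ∀ z ∈ D, W z.1 z.2 ≠ 0)
    (hmin : ∀ z ∈ D,
      pdx (fun x y => P x y / W x y) z.1 z.2 +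
        pdy (fun x y => Q x y / W x y) z.1 z.2 = 0)
    (I : Set ℝ) (hI : I.OrdConnected) (h0I : (0 : ℝ) ∈ I)
    (z : ℝ × ℝ) (hz : z ∈ D)
    (c : ℝ → ℝ × ℝ) (hc0 : c 0 = z) (hcD : ∀ s ∈ I, c s ∈ D)
    (hc : ∀ s ∈ I, HasDerivAt c
      (Q (c s).1 (c s).2 / W (c s).1 (c s).2,
        -(P (c s).1 (c s).2 / W (c s).1 (c s).2)) s) :
    ∀ s ∈ I,
      (Q (c s).1 (c s).2 / W (c s).1 (c s).2 = Q z.1 z.2 / W z.1 z.2 ∧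
        P (c s).1 (c s).2 / W (c s).1 (c s).2 = P z.1 z.2 / W z.1 z.2) ∧
      c s = (z.1 + s * (Q z.1 z.2 / W z.1 z.2), z.2 - s * (P z.1 z.2 / W z.1 z.2)) ∧
      g (c s).1 (c s).2 = g z.1 z.2 +
        s * ((-(P z.1 z.2 / W z.1 z.2)) * z.1 - (Q z.1 z.2 / W z.1 z.2) * z.2) / 2 := by
  set G : ℝ × ℝ → ℝ := fun z => g z.1 z.2 with hGdef
  have hGdiff : ∀ w ∈ D, DifferentiableAt ℝ G w := fun w hw =>
    (hg.differentiableOn (by norm_num) w hw).differentiableAt (hD.mem_nhds hw)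
  set uP : ℝ × ℝ → ℝ := fun w => fderiv ℝ G w (1, 0) + w.2 / 2 with huPdef
  set uQ : ℝ × ℝ → ℝ := fun w => fderiv ℝ G w (0, 1) - w.1 / 2 with huQdef
  set uW : ℝ × ℝ → ℝ := fun w => Real.sqrt (uP w ^ 2 + uQ w ^ 2) with huWdef
  set uu : ℝ × ℝ → ℝ := fun w => uP w / uW w with huudef
  set uv : ℝ × ℝ → ℝ := fun w => uQ w / uW w with huvdef
  -- identification of P, Q, W with the uncurried versions on D
  have hPu : ∀ w ∈ D, P w.1 w.2 = uP w := fun w hw => by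
    rw [hP, huPdef]
    simp only [pdx]
    congr 1
    exact (slice_fst' (hGdiff w hw)).deriv
  have hQu : ∀ w ∈ D, Q w.1 w.2 = uQ w := fun w hw => by
    rw [hQ, huQdef]
    simp only [pdy]
    congr 1
    exact (slice_snd' (hGdiff w hw)).deriv
  have hWu : ∀ w ∈ D, W w.1 w.2 = uW w := fun w hw => by
    rw [hW, hPu w hw, hQu w hw]
  have hWpos : ∀ w ∈ D, 0 < uP w ^ 2 + uQ w ^ 2 := fun w hw => by
    have h1 : (0:ℝ) ≤ uP w ^ 2 + uQ w ^ 2 := by positivity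
    rcases h1.lt_or_eq with h | h
    · exact h
    · exfalso
      apply hWne w hw
      rw [hWu w hw, huWdef]
      simp [← h]
  have hsW : ∀ w ∈ D, uW w ≠ 0 := fun w hw =>
    ne_of_gt (Real.sqrt_pos.mpr (hWpos w hw))
  -- smoothness
  have hfd : ContDiffOn ℝ 1 (fun z => fderiv ℝ G z) D := hg.fderiv_of_isOpen hD (by norm_num)
  have huPc : ∀ w ∈ D, ContDiffAt ℝ 1 uP w := fun w hw =>
    (((ContinuousLinearMap.apply ℝ ℝ ((1 : ℝ), (0 : ℝ))).contDiff.contDiffAt).comp w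
      (hfd.contDiffAt (hD.mem_nhds hw))).add (contDiffAt_snd.div_const 2)
  have huQc : ∀ w ∈ D, ContDiffAt ℝ 1 uQ w := fun w hw =>
    (((ContinuousLinearMap.apply ℝ ℝ ((0 : ℝ), (1 : ℝ))).contDiff.contDiffAt).comp w
      (hfd.contDiffAt (hD.mem_nhds hw))).sub (contDiffAt_fst.div_const 2)
  have huWc : ∀ w ∈ D, ContDiffAt ℝ 1 uW w := fun w hw =>
    (((huPc w hw).pow 2).add ((huQc w hw).pow 2)).sqrt (ne_of_gt (hWpos w hw))
  have huud : ∀ w ∈ D, DifferentiableAt ℝ uu w := fun w hw =>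
    (((huPc w hw).div (huWc w hw) (hsW w hw))).differentiableAt one_ne_zero
  have huvd : ∀ w ∈ D, DifferentiableAt ℝ uv w := fun w hw =>
    (((huQc w hw).div (huWc w hw) (hsW w hw))).differentiableAt one_ne_zero
  -- unit norm identity
  have hone : ∀ w ∈ D, uu w * uu w + uv w * uv w = 1 := fun w hw => by
    have h2 : uW w ^ 2 = uP w ^ 2 + uQ w ^ 2 := Real.sq_sqrt (hWpos w hw).le
    have h3 := hsW w hw
    rw [huudef, huvdef]
    field_simp
    linarith [h2]
  -- differentiated unit norm identity
  have hperp : ∀ w ∈ D, ∀ vec : ℝ × ℝ,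
      uu w * fderiv ℝ uu w vec + uv w * fderiv ℝ uv w vec = 0 := fun w hw vec => by
    have hu := (huud w hw).hasFDerivAt
    have hv := (huvd w hw).hasFDerivAt
    have hsq : HasFDerivAt (fun z => uu z * uu z + uv z * uv z)
        (uu w • fderiv ℝ uu w + uu w • fderiv ℝ uu w +
          (uv w • fderiv ℝ uv w + uv w • fderiv ℝ uv w)) w := (hu.mul hu).add (hv.mul hv)
    have hconstf : HasFDerivAt (fun z => uu z * uu z + uv z * uv z) (0 : ℝ × ℝ →L[ℝ] ℝ) w := by
      apply (hasFDerivAt_const (1 : ℝ) w).congr_of_eventuallyEq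
      filter_upwards [hD.mem_nhds hw] with y hy
      rw [hone y hy]
    have h4 := hsq.unique hconstf
    have h5 := ContinuousLinearMap.ext_iff.mp h4 vec
    simp only [ContinuousLinearMap.add_apply, ContinuousLinearMap.smul_apply,
      ContinuousLinearMap.zero_apply, smul_eq_mul] at h5
    linarith
  -- divergence-free identity
  have hdiv0 : ∀ w ∈ D, fderiv ℝ uu w (1, 0) + fderiv ℝ uv w (0, 1) = 0 := fun w hw => by
    have h1 := hmin w hw
    have e1 : pdx (fun x y => P x y / W x y) w.1 w.2 = fderiv ℝ uu w (1, 0) := by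
      have heq : (fun x' => P x' w.2 / W x' w.2) =ᶠ[nhds w.1] (fun x' => uu (x', w.2)) := by
        have hopen : IsOpen {x' : ℝ | (x', w.2) ∈ D} :=
          hD.preimage (Continuous.prodMk_left w.2)
        filter_upwards [hopen.mem_nhds (show w.1 ∈ {x' : ℝ | (x', w.2) ∈ D} from hw)]
          with x' hx'
        have hp := hPu (x', w.2) hx'
        have hw2 := hWu (x', w.2) hx'
        simp only at hp hw2
        rw [hp, hw2, huudef]
      rw [pdx, heq.deriv_eq]
      exact (slice_fst' (huud w hw)).deriv
    have e2 : pdy (fun x y => Q x y / W x y) w.1 w.2 = fderiv ℝ uv w (0, 1) := by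
      have heq : (fun y' => Q w.1 y' / W w.1 y') =ᶠ[nhds w.2] (fun y' => uv (w.1, y')) := by
        have hopen : IsOpen {y' : ℝ | (w.1, y') ∈ D} :=
          hD.preimage (Continuous.prodMk_right w.1)
        filter_upwards [hopen.mem_nhds (show w.2 ∈ {y' : ℝ | (w.1, y') ∈ D} from hw)]
          with y' hy'
        have hq := hQu (w.1, y') hy'
        have hw2 := hWu (w.1, y') hy'
        simp only at hq hw2
        rw [hq, hw2, huvdef]
      rw [pdy, heq.deriv_eq]
      exact (slice_snd' (huvd w hw)).deriv
    rw [e1, e2] at h1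
    exact h1
  -- the integral curve in terms of uu, uv
  have hc' : ∀ s ∈ I, HasDerivAt c (uv (c s), -(uu (c s))) s := fun s hs => by
    have h := hc s hs
    rwa [hPu (c s) (hcD s hs), hQu (c s) (hcD s hs), hWu (c s) (hcD s hs)] at h
  have hconv : Convex ℝ I := convex_iff_ordConnected.mpr hI
  -- constancy helper
  have hconst : ∀ f : ℝ → ℝ, (∀ s ∈ I, HasDerivWithinAt f 0 I s) → ∀ s ∈ I, f s = f 0 := by
    intro f hf s hs
    have h := hconv.norm_image_sub_le_of_norm_hasDerivWithin_le
      (C := 0) (f' := fun _ => (0 : ℝ)) hf (fun x _ => by simp) h0I hs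
    simp only [norm_zero, zero_mul] at h
    have h2 : ‖f s - f 0‖ ≤ 0 := h
    have h3 : f s - f 0 = 0 := by
      have := norm_nonneg (f s - f 0)
      have h4 : ‖f s - f 0‖ = 0 := le_antisymm h2 this
      exact norm_eq_zero.mp h4
    linarith [h3]
  -- derivative of uu ∘ c and uv ∘ c vanish
  have hcderiv_u : ∀ s ∈ I, HasDerivAt (fun s => uu (c s)) 0 s := fun s hs => by
    have hw := hcD s hs
    have hD1 : HasDerivAt (fun s => uu (c s)) (fderiv ℝ uu (c s) (uv (c s), -(uu (c s)))) s :=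
      (huud _ hw).hasFDerivAt.comp_hasDerivAt s (hc' s hs)
    have hval : fderiv ℝ uu (c s) (uv (c s), -(uu (c s))) = 0 := by
      rw [clm_split]
      have e2 := hperp (c s) hw (0, 1)
      have e3 := hdiv0 (c s) hw
      linear_combination uv (c s) * e3 - e2
    rwa [hval] at hD1
  have hcderiv_v : ∀ s ∈ I, HasDerivAt (fun s => uv (c s)) 0 s := fun s hs => by
    have hw := hcD s hs
    have hD1 : HasDerivAt (fun s => uv (c s)) (fderiv ℝ uv (c s) (uv (c s), -(uu (c s)))) s :=
      (huvd _ hw).hasFDerivAt.comp_hasDerivAt s (hc' s hs)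
    have hval : fderiv ℝ uv (c s) (uv (c s), -(uu (c s))) = 0 := by
      rw [clm_split]
      have e1 := hperp (c s) hw (1, 0)
      have e3 := hdiv0 (c s) hw
      linear_combination e1 - uu (c s) * e3
    rwa [hval] at hD1
  have hcu : ∀ s ∈ I, uu (c s) = uu z := fun s hs => by
    rw [← hc0]
    exact hconst _ (fun t ht => (hcderiv_u t ht).hasDerivWithinAt) s hs
  have hcv : ∀ s ∈ I, uv (c s) = uv z := fun s hs => by
    rw [← hc0]
    exact hconst _ (fun t ht => (hcderiv_v t ht).hasDerivWithinAt) s hs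
  -- c is a straight line
  have hcfst : ∀ s ∈ I, (c s).1 = z.1 + s * uv z := fun s hs => by
    have h1 : ∀ t ∈ I, HasDerivWithinAt (fun t => (c t).1 - t * uv z) 0 I t := fun t ht => by
      have h2 : HasDerivAt (fun t => (c t).1) (uv (c t)) t :=
        (ContinuousLinearMap.fst ℝ ℝ ℝ).hasFDerivAt.comp_hasDerivAt t (hc' t ht)
      have h3 : HasDerivAt (fun t : ℝ => t * uv z) (1 * uv z) t :=
        (hasDerivAt_id t).mul_const (uv z)
      have h4 := h2.sub h3
      have h5 : uv (c t) - 1 * uv z = 0 := by rw [hcv t ht]; ring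
      rw [h5] at h4
      exact h4.hasDerivWithinAt
    have h6 := hconst _ h1 s hs
    rw [hc0] at h6
    have : (c s).1 - s * uv z = z.1 - 0 * uv z := h6
    linarith
  have hcsnd : ∀ s ∈ I, (c s).2 = z.2 - s * uu z := fun s hs => by
    have h1 : ∀ t ∈ I, HasDerivWithinAt (fun t => (c t).2 + t * uu z) 0 I t := fun t ht => by
      have h2 : HasDerivAt (fun t => (c t).2) (-(uu (c t))) t :=
        (ContinuousLinearMap.snd ℝ ℝ ℝ).hasFDerivAt.comp_hasDerivAt t (hc' t ht)
      have h3 : HasDerivAt (fun t : ℝ => t * uu z) (1 * uu z) t :=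
        (hasDerivAt_id t).mul_const (uu z)
      have h4 := h2.add h3
      have h5 : -(uu (c t)) + 1 * uu z = 0 := by rw [hcu t ht]; ring
      rw [h5] at h4
      exact h4.hasDerivWithinAt
    have h6 := hconst _ h1 s hs
    rw [hc0] at h6
    have : (c s).2 + s * uu z = z.2 + 0 * uu z := h6
    linarith
  -- value of g along c
  set K : ℝ := ((-(uu z)) * z.1 - uv z * z.2) / 2 with hKdef
  have hGline : ∀ s ∈ I, G (c s) = G z + s * K := by
    have h1 : ∀ s ∈ I, HasDerivWithinAt (fun s => G (c s) - s * K) 0 I s := fun s hs => by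
      have hw := hcD s hs
      have hcc : HasDerivAt c (uv z, -(uu z)) s := by
        rw [← hcu s hs, ← hcv s hs]
        exact hc' s hs
      have h2 : HasDerivAt (fun s => G (c s)) (fderiv ℝ G (c s) (uv z, -(uu z))) s :=
        (hGdiff _ hw).hasFDerivAt.comp_hasDerivAt s hcc
      have hval : fderiv ℝ G (c s) (uv z, -(uu z)) = K := by
        rw [clm_split]
        have h4 : uP (c s) = uu z * uW (c s) := by
          have h5 := hcu s hs
          rw [huudef] at h5
          simp only at h5
          rw [div_eq_iff (hsW _ hw)] at h5
          exact h5
        have h5 : uQ (c s) = uv z * uW (c s) := by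
          have h6 := hcv s hs
          rw [huvdef] at h6
          simp only at h6
          rw [div_eq_iff (hsW _ hw)] at h6
          exact h6
        have h6 := hcfst s hs
        have h7 := hcsnd s hs
        have h8 : fderiv ℝ G (c s) (1, 0) = uP (c s) - (c s).2 / 2 := by
          rw [huPdef]; ring
        have h9 : fderiv ℝ G (c s) (0, 1) = uQ (c s) + (c s).1 / 2 := by
          rw [huQdef]; ring
        rw [h8, h9, h4, h5, h6, h7, hKdef]
        ring
      have h3 : HasDerivAt (fun s : ℝ => s * K) (1 * K) s := (hasDerivAt_id s).mul_const K
      have h10 := h2.sub h3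
      have h11 : fderiv ℝ G (c s) (uv z, -(uu z)) - 1 * K = 0 := by rw [hval]; ring
      rw [h11] at h10
      exact h10.hasDerivWithinAt
    intro s hs
    have h12 := hconst _ h1 s hs
    rw [hc0] at h12
    have : G (c s) - s * K = G z - 0 * K := h12
    linarith
  -- assemble
  intro s hs
  have hwD := hcD s hs
  refine ⟨⟨?_, ?_⟩, ?_, ?_⟩
  · rw [hQu (c s) hwD, hWu (c s) hwD, hQu z hz, hWu z hz]
    exact hcv s hs
  · rw [hPu (c s) hwD, hWu (c s) hwD, hPu z hz, hWu z hz]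
    exact hcu s hs
  · rw [hQu z hz, hPu z hz, hWu z hz]
    exact Prod.ext (hcfst s hs) (hcsnd s hs)
  · rw [hPu z hz, hQu z hz, hWu z hz]
    show G (c s) = G z + s * ((-(uu z)) * z.1 - uv z * z.2) / 2
    rw [hGline s hs, hKdef]
    ring
end
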